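/- arXiv:1807.02972 — 8 statements merged into one kernel-verified Lean document; each statement's English description precedes it below -/
import Mathlib

section
/- For any single prime p, there is no triple (a,b,c) of distinct positive integers such that ab+1, ac+1, and bc+1 are all powers of p. -/
lemma key_1 (p : ℕ) (hp : p.Prime) (a b c : ℕ)
    (ha : 0 < a) (hab : a < b) (hbc : b < c)
    (h2 : ∃ k : ℕ, a * c + 1 = p ^ k)
    (h3 : ∃ k : ℕ, b * c + 1 = p ^ k) : False := by
  obtain ⟨β, hβ⟩ := h2
  obtain ⟨γ, hγ⟩ := h3
  have hc : 0 < c := by omega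
  have hlt : p ^ β < p ^ γ := by
    rw [← hβ, ← hγ]
    have : a * c < b * c := (Nat.mul_lt_mul_right hc).mpr hab
    omega
  have hβγ : β ≤ γ := le_of_lt ((pow_lt_pow_iff_right₀ hp.one_lt).mp hlt)
  have d1 : p ^ β ∣ b * c + 1 := hγ ▸ pow_dvd_pow p hβγ
  have d2 : p ^ β ∣ a * c + 1 := hβ ▸ dvd_refl _
  have hdvd : p ^ β ∣ (b - a) * c := by
    have h := Nat.dvd_sub d1 d2
    have heq : (b * c + 1) - (a * c + 1) = (b - a) * c := by
      rw [Nat.sub_mul]; omega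
    rwa [heq] at h
  have hβpos : 1 ≤ β := by
    rcases Nat.eq_zero_or_pos β with h0 | h; · simp [h0] at hβ; omega
    · exact h
  have hpc : ¬ p ∣ c := by
    intro hdc
    have hpac : p ∣ a * c := hdc.mul_left a
    have hp1 : p ∣ a * c + 1 := hβ ▸ dvd_pow_self p (by omega)
    have : p ∣ 1 := (Nat.dvd_add_right hpac).mp hp1
    exact Nat.Prime.one_lt hp |>.ne' (Nat.dvd_one.mp this)
  have hcop : Nat.Coprime (p ^ β) c :=
    Nat.Coprime.pow_left _ ((Nat.Prime.coprime_iff_not_dvd hp).mpr hpc)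
  have hd : p ^ β ∣ b - a := hcop.dvd_of_dvd_mul_right hdvd
  have hle : p ^ β ≤ b - a := Nat.le_of_dvd (by omega) hd
  have hac : c ≤ a * c := Nat.le_mul_of_pos_left c ha
  omega

theorem stmt_1 (p : ℕ) (hp : p.Prime) (a b c : ℕ)
    (ha : 0 < a) (hb : 0 < b) (hc : 0 < c)
    (hab : a ≠ b) (hac : a ≠ c) (hbc : b ≠ c)
    (h1 : ∃ k : ℕ, a * b + 1 = p ^ k)
    (h2 : ∃ k : ℕ, a * c + 1 = p ^ k)
    (h3 : ∃ k : ℕ, b * c + 1 = p ^ k) : False := by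
  have c1 : ∃ k : ℕ, b * a + 1 = p ^ k := by rwa [mul_comm]
  have c2 : ∃ k : ℕ, c * a + 1 = p ^ k := by rwa [mul_comm]
  have c3 : ∃ k : ℕ, c * b + 1 = p ^ k := by rwa [mul_comm]
  rcases lt_or_gt_of_ne hab with h | h <;> rcases lt_or_gt_of_ne hac with h' | h' <;>
    rcases lt_or_gt_of_ne hbc with h'' | h''
  · exact key_1 p hp a b c ha h h'' h2 h3
  · exact key_1 p hp a c b ha h' h'' h1 c3
  · omega
  · exact key_1 p hp c a b hc h' h c3 h1
  · exact key_1 p hp b a c hb h h' h3 h2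
  · omega
  · exact key_1 p hp b c a hb h'' h' c1 c2
  · exact key_1 p hp c b a hc h'' h c2 c1
end

section
/- If (a,b,c,d) are positive integers with a < b < c < d and s1 = ab+1, s2 = ac+1, s4 = bc+1, then gcd(s4,s2) * gcd(s4,s1) < s4. -/
theorem stmt_3 (a b c d : ℕ) (ha : 0 < a) (hab : a < b) (hbc : b < c) (hcd : c < d)
    (s1 s2 s4 : ℕ) (hs1 : s1 = a * b + 1) (hs2 : s2 = a * c + 1) (hs4 : s4 = b * c + 1) :
    Nat.gcd s4 s2 * Nat.gcd s4 s1 < s4 := by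
  subst hs1 hs2 hs4
  have h2 : Nat.gcd (b * c + 1) (a * c + 1) ∣ b - a := by
    have : b * (a * c + 1) - a * (b * c + 1) = b - a := by ring_nf; omega
    rw [← this]
    exact Nat.dvd_sub (Dvd.dvd.mul_left (Nat.gcd_dvd_right _ _) b)
      (Dvd.dvd.mul_left (Nat.gcd_dvd_left _ _) a)
  have h1 : Nat.gcd (b * c + 1) (a * b + 1) ∣ c - a := by
    have : c * (a * b + 1) - a * (b * c + 1) = c - a := by ring_nf; omega
    rw [← this]
    exact Nat.dvd_sub (Dvd.dvd.mul_left (Nat.gcd_dvd_right _ _) c)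
      (Dvd.dvd.mul_left (Nat.gcd_dvd_left _ _) a)
  have l2 : Nat.gcd (b * c + 1) (a * c + 1) ≤ b - a := Nat.le_of_dvd (by omega) h2
  have l1 : Nat.gcd (b * c + 1) (a * b + 1) ≤ c - a := Nat.le_of_dvd (by omega) h1
  calc Nat.gcd (b * c + 1) (a * c + 1) * Nat.gcd (b * c + 1) (a * b + 1)
      ≤ (b - a) * (c - a) := Nat.mul_le_mul l2 l1
    _ < b * c + 1 := by
        have : (b - a) * (c - a) ≤ (b - 1) * (c - 1) :=
          Nat.mul_le_mul (by omega) (by omega)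
        nlinarith [this, Nat.sub_le b 1, Nat.sub_le c 1, Nat.sub_add_cancel (by omega : 1 ≤ b), Nat.sub_add_cancel (by omega : 1 ≤ c)]
end

section
/- If (a,b,c,d) are positive integers with a < b < c < d and s3 = ad+1, s5 = bd+1, s6 = cd+1, then gcd(s6,s5) * gcd(s6,s4) < s6, where s4 = bc+1. -/
theorem stmt_4 (a b c d : ℕ) (ha : 0 < a) (hab : a < b) (hbc : b < c) (hcd : c < d)
    (s4 s5 s6 : ℕ) (hs4 : s4 = b * c + 1) (hs5 : s5 = b * d + 1) (hs6 : s6 = c * d + 1) :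
    Nat.gcd s6 s5 * Nat.gcd s6 s4 < s6 := by
  have e1 : c * s5 - b * s6 = c - b := by
    subst hs5 hs6
    have h : c * (b * d + 1) = b * c * d + c := by ring
    have h' : b * (c * d + 1) = b * c * d + b := by ring
    omega
  have e2 : d * s4 - b * s6 = d - b := by
    subst hs4 hs6
    have h : d * (b * c + 1) = b * c * d + d := by ring
    have h' : b * (c * d + 1) = b * c * d + b := by ring
    omega
  have d1 : Nat.gcd s6 s5 ∣ c - b := by
    rw [← e1]
    exact Nat.dvd_sub ((Nat.gcd_dvd_right s6 s5).mul_left c) ((Nat.gcd_dvd_left s6 s5).mul_left b)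
  have d2 : Nat.gcd s6 s4 ∣ d - b := by
    rw [← e2]
    exact Nat.dvd_sub ((Nat.gcd_dvd_right s6 s4).mul_left d) ((Nat.gcd_dvd_left s6 s4).mul_left b)
  have l1 : Nat.gcd s6 s5 ≤ c - b := Nat.le_of_dvd (by omega) d1
  have l2 : Nat.gcd s6 s4 ≤ d - b := Nat.le_of_dvd (by omega) d2
  have key : (c - b) * (d - b) < s6 := by
    obtain ⟨x, rfl⟩ : ∃ x, c = b + x := ⟨c - b, by omega⟩
    obtain ⟨y, rfl⟩ : ∃ y, d = b + x + y := ⟨d - (b + x), by omega⟩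
    have hx : (b + x) - b = x := by omega
    have hy : (b + x + y) - b = x + y := by omega
    rw [hx, hy, hs6]
    nlinarith
  calc Nat.gcd s6 s5 * Nat.gcd s6 s4 ≤ (c - b) * (d - b) := Nat.mul_le_mul l1 l2
    _ < s6 := key
end

section
/- Let p be a prime with p ≡ 3 mod 4 and q a prime distinct from p. If a, b, c are positive integers such that ab+1 = p^{α1} q^{β1}, ac+1 = p^{α2} q^{β2}, bc+1 = p^{α4} q^{β4} with all three exponents α1, α2, α4 positive, then we reach a contradiction; i.e., at least one of α1, α2, α4 equals 0. -/
theorem stmt_5 (p q : ℕ) (hp : p.Prime) (hq : q.Prime) (hpq : p ≠ q)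
    (hp4 : p % 4 = 3) (a b c : ℕ) (ha : 0 < a) (hb : 0 < b) (hc : 0 < c)
    (α1 β1 α2 β2 α4 β4 : ℕ)
    (h1 : a * b + 1 = p ^ α1 * q ^ β1)
    (h2 : a * c + 1 = p ^ α2 * q ^ β2)
    (h4 : b * c + 1 = p ^ α4 * q ^ β4)
    (hα1 : 0 < α1) (hα2 : 0 < α2) (hα4 : 0 < α4) : False := by
  haveI : Fact p.Prime := ⟨hp⟩
  have key : ∀ x y : ℕ, ∀ α β : ℕ, 0 < α → x * y + 1 = p ^ α * q ^ β →
      (x : ZMod p) * y = -1 := by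
    intro x y α β hα h
    have hdvd : p ∣ x * y + 1 := h ▸ Dvd.dvd.mul_right (dvd_pow_self p hα.ne') _
    have : ((x * y + 1 : ℕ) : ZMod p) = 0 := (ZMod.natCast_eq_zero_iff _ _).2 hdvd
    push_cast at this
    linear_combination this
  have e1 := key a b _ _ hα1 h1
  have e2 := key a c _ _ hα2 h2
  have e3 := key b c _ _ hα4 h4
  have hsq : IsSquare (-1 : ZMod p) := ⟨a * b * c, by linear_combination -((a:ZMod p)*c*((b:ZMod p)*c))*e1 + ((b:ZMod p)*c)*e2 - e3⟩
  exact (ZMod.exists_sq_eq_neg_one_iff.mp hsq) hp4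
end

section
/- Let p ≡ 3 mod 4 be prime and q ≠ p a prime. If (a,b,c,d) is a {p,q}-Diophantine quadruple with a < b < c < d, and α_i denotes the exponent of p in s_i (where s1=ab+1, s2=ac+1, s3=ad+1, s4=bc+1, s5=bd+1, s6=cd+1), then α1=α6=0 or α2=α5=0 or α3=α4=0. -/
lemma sqlem (p : ℕ) (hp : p.Prime) (hp4 : p % 4 = 3) (x y z : ℕ)
    (h1 : p ∣ x * y + 1) (h2 : p ∣ x * z + 1) (h3 : p ∣ y * z + 1) : False := by
  haveI : Fact p.Prime := ⟨hp⟩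
  have e1 : ((x : ZMod p) * y) = -1 := by
    have h := (ZMod.natCast_eq_zero_iff _ _).mpr h1
    push_cast at h
    linear_combination h
  have e2 : ((x : ZMod p) * z) = -1 := by
    have h := (ZMod.natCast_eq_zero_iff _ _).mpr h2
    push_cast at h
    linear_combination h
  have e3 : ((y : ZMod p) * z) = -1 := by
    have h := (ZMod.natCast_eq_zero_iff _ _).mpr h3
    push_cast at h
    linear_combination h
  have hsq : IsSquare (-1 : ZMod p) := by
    refine ⟨(x : ZMod p) * y * z, ?_⟩
    rw [show ((x : ZMod p) * y * z) * ((x : ZMod p) * y * z)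
        = ((x : ZMod p) * y) * ((x : ZMod p) * z) * ((y : ZMod p) * z) by ring,
      e1, e2, e3]
    ring
  rw [ZMod.exists_sq_eq_neg_one_iff] at hsq
  exact hsq hp4

lemma qpow (q : ℕ) (hq : q.Prime) (x y z : ℕ) (hx : 0 < x) (hxy : x < y) (hyz : y < z)
    (i j k : ℕ) (hi : x * y + 1 = q ^ i) (hj : x * z + 1 = q ^ j)
    (hk : y * z + 1 = q ^ k) : False := by
  have hq1 : 1 < q := hq.one_lt
  have hxz : x * z < y * z := Nat.mul_lt_mul_of_pos_right hxy (by omega)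
  have hjk : j < k := by
    have h : q ^ j < q ^ k := by rw [← hj, ← hk]; exact Nat.add_lt_add_right hxz 1
    exact (Nat.pow_lt_pow_iff_right hq1).mp h
  have hk1 : k ≠ 0 := by
    intro h
    rw [h, pow_zero] at hk
    nlinarith
  have hqz : ¬ q ∣ z := by
    intro hdz
    have hd1 : q ∣ y * z + 1 := hk ▸ dvd_pow_self q hk1
    have : q ∣ 1 := (Nat.dvd_add_right (Dvd.dvd.mul_left hdz y)).mp hd1
    exact hq1.ne' (Nat.dvd_one.mp this)
  have hdvd : q ^ j ∣ z * (y - x) := by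
    have h' : x * z + z * (y - x) = y * z := by
      have hh : x + (y - x) = y := by omega
      calc x * z + z * (y - x) = (x + (y - x)) * z := by ring
        _ = y * z := by rw [hh]
    have heq : z * (y - x) = q ^ k - q ^ j := by omega
    rw [heq]
    exact Nat.dvd_sub (pow_dvd_pow q hjk.le) dvd_rfl
  have hcop : q ^ j ∣ y - x := by
    have hc : Nat.Coprime (q ^ j) z := Nat.Coprime.pow_left _ (hq.coprime_iff_not_dvd.mpr hqz)
    exact hc.dvd_of_dvd_mul_left hdvd
  have hzle : z ≤ x * z := Nat.le_mul_of_pos_left z hx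
  have hlt : y - x < q ^ j := by omega
  have hpos : 0 < y - x := by omega
  have := Nat.le_of_dvd hpos hcop
  omega

theorem stmt_6 (p q : ℕ) (hp : p.Prime) (hq : q.Prime) (hpq : p ≠ q)
    (hp4 : p % 4 = 3)
    (a b c d : ℕ) (ha : 0 < a) (hab : a < b) (hbc : b < c) (hcd : c < d)
    (α1 α2 α3 α4 α5 α6 β1 β2 β3 β4 β5 β6 : ℕ)
    (h1 : a * b + 1 = p ^ α1 * q ^ β1)
    (h2 : a * c + 1 = p ^ α2 * q ^ β2)
    (h3 : a * d + 1 = p ^ α3 * q ^ β3)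
    (h4 : b * c + 1 = p ^ α4 * q ^ β4)
    (h5 : b * d + 1 = p ^ α5 * q ^ β5)
    (h6 : c * d + 1 = p ^ α6 * q ^ β6) :
    (α1 = 0 ∧ α6 = 0) ∨ (α2 = 0 ∧ α5 = 0) ∨ (α3 = 0 ∧ α4 = 0) := by
  by_contra H
  push_neg at H
  obtain ⟨H1, H2, H3⟩ := H
  have P1 : p ∣ a * b + 1 ∨ p ∣ c * d + 1 := by
    rcases Nat.eq_zero_or_pos α1 with h | h
    · right; rw [h6]; exact Dvd.dvd.mul_right (dvd_pow_self p (H1 h)) _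
    · left; rw [h1]; exact Dvd.dvd.mul_right (dvd_pow_self p h.ne') _
  have P2 : p ∣ a * c + 1 ∨ p ∣ b * d + 1 := by
    rcases Nat.eq_zero_or_pos α2 with h | h
    · right; rw [h5]; exact Dvd.dvd.mul_right (dvd_pow_self p (H2 h)) _
    · left; rw [h2]; exact Dvd.dvd.mul_right (dvd_pow_self p h.ne') _
  have P3 : p ∣ a * d + 1 ∨ p ∣ b * c + 1 := by
    rcases Nat.eq_zero_or_pos α3 with h | h
    · right; rw [h4]; exact Dvd.dvd.mul_right (dvd_pow_self p (H3 h)) _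
    · left; rw [h3]; exact Dvd.dvd.mul_right (dvd_pow_self p h.ne') _
  -- helper to extract q-power
  have hz4 : ¬ p ∣ b * c + 1 → b * c + 1 = q ^ β4 := by
    intro hnp
    have : α4 = 0 := by
      by_contra hne
      exact hnp (h4 ▸ Dvd.dvd.mul_right (dvd_pow_self p hne) _)
    rw [h4, this, pow_zero, one_mul]
  have hz5 : ¬ p ∣ b * d + 1 → b * d + 1 = q ^ β5 := by
    intro hnp
    have : α5 = 0 := by
      by_contra hne
      exact hnp (h5 ▸ Dvd.dvd.mul_right (dvd_pow_self p hne) _)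
    rw [h5, this, pow_zero, one_mul]
  have hz6 : ¬ p ∣ c * d + 1 → c * d + 1 = q ^ β6 := by
    intro hnp
    have : α6 = 0 := by
      by_contra hne
      exact hnp (h6 ▸ Dvd.dvd.mul_right (dvd_pow_self p hne) _)
    rw [h6, this, pow_zero, one_mul]
  have hz1 : ¬ p ∣ a * b + 1 → a * b + 1 = q ^ β1 := by
    intro hnp
    have : α1 = 0 := by
      by_contra hne
      exact hnp (h1 ▸ Dvd.dvd.mul_right (dvd_pow_self p hne) _)
    rw [h1, this, pow_zero, one_mul]
  have hz2 : ¬ p ∣ a * c + 1 → a * c + 1 = q ^ β2 := by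
    intro hnp
    have : α2 = 0 := by
      by_contra hne
      exact hnp (h2 ▸ Dvd.dvd.mul_right (dvd_pow_self p hne) _)
    rw [h2, this, pow_zero, one_mul]
  have hz3 : ¬ p ∣ a * d + 1 → a * d + 1 = q ^ β3 := by
    intro hnp
    have : α3 = 0 := by
      by_contra hne
      exact hnp (h3 ▸ Dvd.dvd.mul_right (dvd_pow_self p hne) _)
    rw [h3, this, pow_zero, one_mul]
  rcases P1 with p1 | p1 <;> rcases P2 with p2 | p2 <;> rcases P3 with p3 | p3
  · -- ab, ac, ad : all contain a
    have n4 : ¬ p ∣ b * c + 1 := fun h => sqlem p hp hp4 a b c p1 p2 h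
    have n5 : ¬ p ∣ b * d + 1 := fun h => sqlem p hp hp4 a b d p1 p3 h
    have n6 : ¬ p ∣ c * d + 1 := fun h => sqlem p hp hp4 a c d p2 p3 h
    exact qpow q hq b c d (by omega) hbc hcd _ _ _ (hz4 n4) (hz5 n5) (hz6 n6)
  · -- ab, ac, bc : square case (abc)
    exact sqlem p hp hp4 a b c p1 p2 p3
  · -- ab, bd, ad : square case (abd)
    exact sqlem p hp hp4 a b d p1 p3 p2
  · -- ab, bd, bc : all contain b
    have n2 : ¬ p ∣ a * c + 1 := fun h => sqlem p hp hp4 a b c p1 h p3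
    have n3 : ¬ p ∣ a * d + 1 := fun h => sqlem p hp hp4 a b d p1 h p2
    have n6 : ¬ p ∣ c * d + 1 := fun h => sqlem p hp hp4 b c d p3 p2 h
    exact qpow q hq a c d ha (by omega) hcd _ _ _ (hz2 n2) (hz3 n3) (hz6 n6)
  · -- cd, ac, ad : square case (acd)
    exact sqlem p hp hp4 a c d p2 p3 p1
  · -- cd, ac, bc : all contain c
    have n1 : ¬ p ∣ a * b + 1 := fun h => sqlem p hp hp4 a b c h p2 p3
    have n3 : ¬ p ∣ a * d + 1 := fun h => sqlem p hp hp4 a c d p2 h p1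
    have n5 : ¬ p ∣ b * d + 1 := fun h => sqlem p hp hp4 b c d p3 h p1
    exact qpow q hq a b d ha hab (by omega) _ _ _ (hz1 n1) (hz3 n3) (hz5 n5)
  · -- cd, bd, ad : all contain d
    have n1 : ¬ p ∣ a * b + 1 := fun h => sqlem p hp hp4 a b d h p3 p2
    have n2 : ¬ p ∣ a * c + 1 := fun h => sqlem p hp hp4 a c d h p3 p1
    have n4 : ¬ p ∣ b * c + 1 := fun h => sqlem p hp hp4 b c d h p2 p1
    exact qpow q hq a b c ha hab hbc _ _ _ (hz1 n1) (hz2 n2) (hz4 n4)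
  · -- cd, bd, bc : square case (bcd)
    exact sqlem p hp hp4 b c d p3 p2 p1
end

section
/- Let a < b < c < d be positive integers. Then the quantity T = (ab+1)(cd+1) / ((ad+1)(bc+1)) satisfies 1 < T < 1 + 1/(ab). -/
theorem stmt_11 (a b c d : ℕ) (ha : 0 < a) (hab : a < b) (hbc : b < c) (hcd : c < d) :
    1 < ((a * b + 1) * (c * d + 1) : ℚ) / ((a * d + 1) * (b * c + 1)) ∧
    ((a * b + 1) * (c * d + 1) : ℚ) / ((a * d + 1) * (b * c + 1)) < 1 + 1 / (a * b) := by
  have hA : (1:ℚ) ≤ a := by exact_mod_cast ha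
  have hB : (a:ℚ) < b := by exact_mod_cast hab
  have hC : (b:ℚ) < c := by exact_mod_cast hbc
  have hD' : (c:ℚ) < d := by exact_mod_cast hcd
  have hA0 : (0:ℚ) < a := by linarith
  have hB0 : (0:ℚ) < b := by linarith
  have hC0 : (0:ℚ) < c := by linarith
  have hD0 : (0:ℚ) < d := by linarith
  have hDen : (0:ℚ) < (a*d+1)*(b*c+1) := by positivity
  have hab0 : (0:ℚ) < a*b := by positivity
  constructor
  · rw [lt_div_iff₀ hDen]
    nlinarith [mul_pos (show (0:ℚ) < d - b by linarith) (show (0:ℚ) < c - a by linarith)]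
  · have h1 : (1:ℚ) + 1/(a*b) = (a*b+1)/(a*b) := by field_simp
    rw [h1, div_lt_div_iff₀ hDen hab0]
    nlinarith [mul_pos (mul_pos hA0 (show (0:ℚ) < d - b by linarith)) (show (0:ℚ) < a*b+1 by positivity), mul_pos hab0 (show (0:ℚ) < a*b+1 by positivity)]
end

section
/- Let a < b < c < d be positive integers. Then T' = (ac+1)(bd+1) / ((ad+1)(bc+1)) satisfies 1 < T' < 1 + 1/(ac). -/
theorem stmt_12 (a b c d : ℕ) (ha : 0 < a) (hab : a < b) (hbc : b < c) (hcd : c < d) :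
    1 < ((a * c + 1) * (b * d + 1) : ℚ) / ((a * d + 1) * (b * c + 1)) ∧
    ((a * c + 1) * (b * d + 1) : ℚ) / ((a * d + 1) * (b * c + 1)) < 1 + 1 / (a * c) := by
  have hA : (1:ℚ) ≤ (a:ℚ) := by exact_mod_cast ha
  have hB : (a:ℚ) + 1 ≤ (b:ℚ) := by exact_mod_cast hab
  have hC : (b:ℚ) + 1 ≤ (c:ℚ) := by exact_mod_cast hbc
  have hD : (c:ℚ) + 1 ≤ (d:ℚ) := by exact_mod_cast hcd
  have hBp : (0:ℚ) < (b:ℚ) := by linarith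
  have hCp : (0:ℚ) < (c:ℚ) := by linarith
  have hDp : (0:ℚ) < (d:ℚ) := by linarith
  have hden : (0:ℚ) < ((a:ℚ) * d + 1) * ((b:ℚ) * c + 1) := by positivity
  have hac : (0:ℚ) < (a:ℚ) * c := by positivity
  constructor
  · rw [lt_div_iff₀ hden]
    nlinarith [mul_pos hBp hDp, mul_pos hCp hDp]
  · rw [div_lt_iff₀ hden]
    have h1 : (1:ℚ) + 1 / ((a:ℚ) * c) = ((a:ℚ)*c + 1) / ((a:ℚ)*c) := by
      field_simp
    rw [h1, div_mul_eq_mul_div, lt_div_iff₀ hac]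
    have h2 : (a:ℚ) * c * ((b:ℚ) * d + 1) < ((a:ℚ) * d + 1) * ((b:ℚ) * c + 1) := by
      nlinarith
    calc ((a:ℚ)*c + 1) * ((b:ℚ)*d + 1) * ((a:ℚ)*c)
        = ((a:ℚ)*c + 1) * ((a:ℚ)*c * ((b:ℚ)*d + 1)) := by ring
      _ < ((a:ℚ)*c + 1) * (((a:ℚ)*d + 1) * ((b:ℚ)*c + 1)) := by
          apply mul_lt_mul_of_pos_left h2; positivity
end

section
/- Let p < q be odd primes and a < b < c < d positive integers forming a {p,q}-Diophantine quadruple. Then it is impossible that simultaneously ab+1 = q^{β1}, ac+1 = p^{α2}, ad+1 = p^{α3} q^{β3}, bc+1 = p^{α4} q^{β4}, bd+1 = p^{α5}, cd+1 = q^{β6} for nonnegative integers α2, α3, α4, α5, β1, β3, β4, β6. -/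
set_option maxHeartbeats 1000000

theorem descentA (q B1 G : ℕ) (hq : 5 ≤ q) (hB1 : 1 ≤ B1) (hG : 1 ≤ G)
    (h3G : 3 * G + 2 ≤ q ^ B1) :
    ∀ m z : ℕ, 1 ≤ z → z * q ^ B1 = z + q ^ m + G → False := by
  intro m
  induction m using Nat.strong_induction_on with
  | _ m ih =>
    intro z hz heq
    have hQ5 : 5 ≤ q ^ B1 := le_trans hq (Nat.le_self_pow (by omega) q)
    by_cases hm : m < B1
    · have h5m : 5 * q ^ m ≤ q ^ B1 := by
        calc 5 * q ^ m ≤ q * q ^ m := by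
              exact Nat.mul_le_mul_right _ hq
          _ = q ^ (m+1) := by ring
          _ ≤ q ^ B1 := Nat.pow_le_pow_right (by omega) (by omega)
      have hzQ : q ^ B1 ≤ z * q ^ B1 := Nat.le_mul_of_pos_left _ (by omega)
      have h5z : 5 * z ≤ z * q ^ B1 := by
        calc 5 * z = z * 5 := by ring
          _ ≤ z * q ^ B1 := Nat.mul_le_mul_left _ hQ5
      omega
    · push_neg at hm
      have hsplit : q ^ m = q ^ B1 * q ^ (m - B1) := by
        rw [← pow_add]; congr 1; omega
      have hge : q ^ (m - B1) ≤ z := by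
        by_contra hlt
        push_neg at hlt
        have : z * q ^ B1 < q ^ (m - B1) * q ^ B1 := by
          exact (Nat.mul_lt_mul_right (by positivity)).mpr hlt
        rw [hsplit] at heq
        nlinarith [heq]
      set k := z - q ^ (m - B1) with hk
      have hzk : z = q ^ (m - B1) + k := by omega
      have hQk : q ^ B1 * k = z + G := by
        rw [hsplit] at heq
        have : (q ^ (m - B1) + k) * q ^ B1 = (q ^ (m-B1) + k) + q ^ B1 * q ^ (m - B1) + G := by
          rw [← hzk]; exact heq
        nlinarith [this]
      have hk1 : 1 ≤ k := by
        rcases Nat.eq_zero_or_pos k with h0 | h1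
        · rw [h0] at hQk; omega
        · omega
      have hnew : k * q ^ B1 = k + q ^ (m - B1) + G := by
        rw [mul_comm, hQk, hzk]; omega
      exact ih (m - B1) (by omega) k hk1 hnew


theorem exactval (r X s Y D i j : ℕ) (hr : r.Prime) (hX : ¬ r ∣ X) (hs : ¬ r ∣ s)
    (hD : 0 < D) (hDlt : D < r ^ j)
    (heq : X * (r ^ i * s) = Y * r ^ j + D) :
    i < j ∧ r ^ i ∣ D ∧ ¬ r ^ (i+1) ∣ D := by
  have hrpos : 0 < r ^ i := pow_pos hr.pos i
  have hij : i < j := by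
    by_contra hle
    push_neg at hle
    have h1 : r ^ j ∣ X * (r ^ i * s) :=
      Dvd.dvd.mul_left (Dvd.dvd.mul_right (pow_dvd_pow r hle) s) X
    have h2 : r ^ j ∣ D := (Nat.dvd_add_right (Dvd.dvd.mul_left dvd_rfl Y)).mp (heq ▸ h1)
    exact absurd (Nat.le_of_dvd hD h2) (by omega)
  have hdvd : r ^ i ∣ D := by
    have h1 : r ^ i ∣ X * (r ^ i * s) :=
      Dvd.dvd.mul_left (Dvd.dvd.mul_right dvd_rfl s) X
    exact (Nat.dvd_add_right (Dvd.dvd.mul_left (pow_dvd_pow r (by omega)) Y)).mp (heq ▸ h1)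
  refine ⟨hij, hdvd, ?_⟩
  intro hbad
  have h1 : r ^ (i+1) ∣ Y * r ^ j + D :=
    dvd_add (Dvd.dvd.mul_left (pow_dvd_pow r (by omega)) Y) hbad
  rw [← heq] at h1
  have h2 : r ^ (i+1) ∣ r ^ i * s := by
    have hcop : Nat.Coprime (r ^ (i+1)) X :=
      Nat.Coprime.pow_left _ ((Nat.Prime.coprime_iff_not_dvd hr).mpr hX)
    exact hcop.dvd_of_dvd_mul_left h1
  have h3 : r ∣ s := by
    rw [pow_succ] at h2
    exact (Nat.mul_dvd_mul_iff_left hrpos).mp h2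
  exact hs h3

theorem aux19 (a b c B : ℕ) (h2a : 2 ≤ a) (hab : a < b) (hbc : b < c)
    (hBb : b = a + B)
    (hle : (a*c+1)*(a*b+1) ≤ (b*c+1) + B*(a*b+1)) : False := by
  have k1 : 2*a*(b*c) ≤ a*a*(b*c) := Nat.mul_le_mul_right _ (by nlinarith)
  have k2 : B*(a*b) ≤ b*(a*b) := Nat.mul_le_mul_right _ (by omega)
  have k3 : b*(a*b) ≤ c*(a*b) := Nat.mul_le_mul_right _ (by omega)
  have k4 : 2*(b*c) ≤ a*(b*c) := Nat.mul_le_mul_right _ (by omega)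
  have k5 : B ≤ b*c := le_trans (by omega : B ≤ b) (Nat.le_mul_of_pos_right _ (by omega))
  have k6 : 1 ≤ a*b := Nat.one_le_iff_ne_zero.mpr (Nat.mul_ne_zero (by omega) (by omega))
  nlinarith [k1, k2, k3, k4, k5, k6, hle]

theorem finalstep (q B1 M K P' : ℕ) (hq5 : 5 ≤ q) (hB1 : 1 ≤ B1) (hK3 : 3 ≤ K)
    (hKle : K + 2 ≤ q ^ B1)
    (hE : K*(q^B1*q^M) + q^B1 + K*P' = q^B1*(K*P') + 2) : False := by
  set Q := q ^ B1 with hQdef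
  set Y := q ^ M with hYdef
  have hQ5 : 5 ≤ Q := le_trans hq5 (Nat.le_self_pow (by omega) q)
  have hY1 : 1 ≤ Y := Nat.one_le_iff_ne_zero.mpr (by positivity)
  -- P' > Y
  have hPY : Y < P' := by
    have h1 : K*Q*Y < K*Q*P' := by nlinarith [hE]
    have h2 : 0 < K*Q := by positivity
    exact Nat.lt_of_mul_lt_mul_left h1
  obtain ⟨z, hz⟩ : ∃ z, P' = Y + z ∧ 1 ≤ z := ⟨P' - Y, by omega⟩
  obtain ⟨hzP, hz1⟩ := hz
  -- E2 : K*(Q*z) + 2 = Q + K*Y + K*z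
  have hE2 : K*(Q*z) + 2 = Q + K*Y + K*z := by
    rw [hzP] at hE
    nlinarith [hE]
  -- Q*z > Y + z
  have hQz : Y + z < Q * z := by
    have h1 : K*(Y+z) + 3 ≤ K*(Q*z) := by nlinarith [hE2]
    have : K*(Y+z) < K*(Q*z) := by omega
    exact Nat.lt_of_mul_lt_mul_left this
  obtain ⟨G, hG⟩ : ∃ G, Q * z = Y + z + G ∧ 1 ≤ G := by
    refine ⟨Q*z - (Y+z), ?_, ?_⟩ <;> omega
  obtain ⟨hGe, hG1'⟩ := hG
  -- K*G + 2 = Q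
  have hKG : K*G + 2 = Q := by nlinarith [hE2, hGe]
  have hG1 : 1 ≤ G := hG1'
  have h3G : 3 * G + 2 ≤ Q := by nlinarith [hKG]
  have hfin : z * Q = z + q ^ M + G := by
    rw [← hYdef]
    nlinarith [hGe]
  exact descentA q B1 G hq5 hB1 hG1 h3G M z hz1 hfin

theorem stmt_15 (p q : ℕ) (hp : p.Prime) (hq : q.Prime) (hpq : p < q)
    (hpo : Odd p) (hqo : Odd q)
    (a b c d : ℕ) (ha : 0 < a) (hab : a < b) (hbc : b < c) (hcd : c < d)
    (α2 α3 α4 α5 β1 β3 β4 β6 : ℕ)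
    (h1 : a * b + 1 = q ^ β1)
    (h2 : a * c + 1 = p ^ α2)
    (h3 : a * d + 1 = p ^ α3 * q ^ β3)
    (h4 : b * c + 1 = p ^ α4 * q ^ β4)
    (h5 : b * d + 1 = p ^ α5)
    (h6 : c * d + 1 = q ^ β6) : False := by
  -- basic bounds
  have hp3 : 3 ≤ p := by
    have h2le := hp.two_le
    rcases Nat.lt_or_ge p 3 with h | h
    · interval_cases p
      · exact absurd hpo (by decide)
    · exact h
  have hq5 : 5 ≤ q := by
    have h2le := hq.two_le
    rcases Nat.lt_or_ge q 5 with h | h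
    · interval_cases q
      · exact absurd hqo (by decide)
      · omega
      · exact absurd hqo (by decide)
    · exact h
  have hpne : p ≠ q := by omega
  have hp1 : 1 < p := by omega
  have hq1 : 1 < q := by omega
  -- exponents positive on the four pure powers
  have hβ1 : 1 ≤ β1 := by
    rcases Nat.eq_zero_or_pos β1 with h0 | h
    · rw [h0] at h1; simp at h1; rcases h1 with h' | h' <;> omega
    · exact h
  have hα2 : 1 ≤ α2 := by
    rcases Nat.eq_zero_or_pos α2 with h0 | h
    · rw [h0] at h2; simp at h2; rcases h2 with h' | h' <;> omega
    · exact h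
  have hα5 : 1 ≤ α5 := by
    rcases Nat.eq_zero_or_pos α5 with h0 | h
    · rw [h0] at h5; simp at h5; rcases h5 with h' | h' <;> omega
    · exact h
  have hβ6 : 1 ≤ β6 := by
    rcases Nat.eq_zero_or_pos β6 with h0 | h
    · rw [h0] at h6; simp at h6; rcases h6 with h' | h' <;> omega
    · exact h
  -- p,q do not divide a b c d
  have hdvd1 : ∀ n : ℕ, p ∣ n + 1 → p ∣ n → False := by
    intro n hn1 hn
    have := Nat.dvd_sub hn1 hn
    simp at this
    omega
  have hqdvd1 : ∀ n : ℕ, q ∣ n + 1 → q ∣ n → False := by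
    intro n hn1 hn
    have := Nat.dvd_sub hn1 hn
    simp at this
    omega
  have hpa : ¬ p ∣ a := fun h =>
    hdvd1 (a*c) (h2 ▸ dvd_pow_self p (by omega : α2 ≠ 0)) (h.mul_right c)
  have hpc : ¬ p ∣ c := fun h =>
    hdvd1 (a*c) (h2 ▸ dvd_pow_self p (by omega : α2 ≠ 0)) (h.mul_left a)
  have hpb : ¬ p ∣ b := fun h =>
    hdvd1 (b*d) (h5 ▸ dvd_pow_self p (by omega : α5 ≠ 0)) (h.mul_right d)
  have hpd : ¬ p ∣ d := fun h =>
    hdvd1 (b*d) (h5 ▸ dvd_pow_self p (by omega : α5 ≠ 0)) (h.mul_left b)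
  have hqa : ¬ q ∣ a := fun h =>
    hqdvd1 (a*b) (h1 ▸ dvd_pow_self q (by omega : β1 ≠ 0)) (h.mul_right b)
  have hqb : ¬ q ∣ b := fun h =>
    hqdvd1 (a*b) (h1 ▸ dvd_pow_self q (by omega : β1 ≠ 0)) (h.mul_left a)
  have hqc : ¬ q ∣ c := fun h =>
    hqdvd1 (c*d) (h6 ▸ dvd_pow_self q (by omega : β6 ≠ 0)) (h.mul_right d)
  have hqd : ¬ q ∣ d := fun h =>
    hqdvd1 (c*d) (h6 ▸ dvd_pow_self q (by omega : β6 ≠ 0)) (h.mul_left c)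
  have hcoppq : Nat.Coprime p q := (Nat.coprime_primes hp hq).mpr hpne
  -- size orders
  have hα25 : α2 < α5 := by
    have : (p:ℕ) ^ α2 < p ^ α5 := by
      rw [← h2, ← h5]
      have : a * c < b * d := by
        calc a * c < b * c := by exact (Nat.mul_lt_mul_right (by omega)).mpr hab
          _ < b * d := by exact (Nat.mul_lt_mul_left (by omega)).mpr hcd
      omega
    exact (Nat.pow_lt_pow_iff_right hp1).mp this
  have hβ16 : β1 < β6 := by
    have : (q:ℕ) ^ β1 < q ^ β6 := by
      rw [← h1, ← h6]
      have : a * b < c * d := by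
        calc a * b < c * b := by exact (Nat.mul_lt_mul_right (by omega)).mpr (by omega)
          _ < c * d := by exact (Nat.mul_lt_mul_left (by omega)).mpr (by omega)
      omega
    exact (Nat.pow_lt_pow_iff_right hq1).mp this

  -- differences
  obtain ⟨B, hB⟩ : ∃ B, b = a + B ∧ 1 ≤ B := ⟨b - a, by omega⟩
  obtain ⟨hBb, hB1'⟩ := hB
  obtain ⟨DC, hDC⟩ : ∃ E, d = c + E ∧ 1 ≤ E := ⟨d - c, by omega⟩
  obtain ⟨hDCd, hDC1⟩ := hDC
  obtain ⟨CA, hCA⟩ : ∃ E, c = a + E ∧ 1 ≤ E := ⟨c - a, by omega⟩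
  obtain ⟨hCAc, hCA1⟩ := hCA
  obtain ⟨DB, hDB⟩ : ∃ E, d = b + E ∧ 1 ≤ E := ⟨d - b, by omega⟩
  obtain ⟨hDBd, hDB1⟩ := hDB
  -- (1a) : α3 < α5, p^α3 ∣ B exactly
  have key1a : b * (p ^ α3 * q ^ β3) = a * p ^ α5 + B := by
    rw [← h3, ← h5, hBb]; ring
  have hpq' : ∀ k : ℕ, ¬ p ∣ q ^ k := fun k h =>
    hpne ((Nat.prime_dvd_prime_iff_eq hp hq).mp (hp.dvd_of_dvd_pow h))
  have hqp' : ∀ k : ℕ, ¬ q ∣ p ^ k := fun k h =>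
    hpne.symm ((Nat.prime_dvd_prime_iff_eq hq hp).mp (hq.dvd_of_dvd_pow h))
  have hBlt5 : B < p ^ α5 := by
    have : b ≤ b * d := Nat.le_mul_of_pos_right _ (by omega)
    omega
  have F7 := exactval p b (q ^ β3) a B α3 α5 hp hpb (hpq' β3) (by omega) hBlt5 key1a
  obtain ⟨hα35, hdvdB, hexB⟩ := F7
  -- (1c) : α4 < α5, p^α4 ∣ DC exactly
  have key1c : d * (p ^ α4 * q ^ β4) = c * p ^ α5 + DC := by
    rw [← h4, ← h5, hDCd]; ring
  have hDClt5 : DC < p ^ α5 := by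
    have : d ≤ b * d := Nat.le_mul_of_pos_left _ (by omega)
    omega
  have F8 := exactval p d (q ^ β4) c DC α4 α5 hp hpd (hpq' β4) (by omega) hDClt5 key1c
  obtain ⟨hα45, hdvdDC, hexDC⟩ := F8
  -- (1d) : β3 < β6, q^β3 ∣ CA exactly
  have key1d : c * (q ^ β3 * p ^ α3) = a * q ^ β6 + CA := by
    rw [← h6, hCAc]
    have h3' : a * d + 1 = q ^ β3 * p ^ α3 := by rw [h3]; ring
    rw [← h3']; ring
  have hCAlt6 : CA < q ^ β6 := by
    have : c ≤ c * d := Nat.le_mul_of_pos_right _ (by omega)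
    omega
  have F9 := exactval q c (p ^ α3) a CA β3 β6 hq hqc (hqp' α3) (by omega) hCAlt6 key1d
  obtain ⟨hβ36, hdvdCA, hexCA⟩ := F9
  -- (1e) : β4 < β6, q^β4 ∣ DB exactly
  have key1e : d * (q ^ β4 * p ^ α4) = b * q ^ β6 + DB := by
    rw [← h6, hDBd]
    have h4' : b * c + 1 = q ^ β4 * p ^ α4 := by rw [h4]; ring
    rw [← h4']; ring
  have hDBlt6 : DB < q ^ β6 := by
    have : d ≤ c * d := Nat.le_mul_of_pos_left _ (by omega)
    omega
  have F10 := exactval q d (p ^ α4) b DB β4 β6 hq hqd (hqp' α4) (by omega) hDBlt6 key1e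
  obtain ⟨hβ46, hdvdDB, hexDB⟩ := F10
  -- (2a) α3 < α2
  have hbltp : b < p ^ α2 := by
    have h1' : c ≤ a * c := Nat.le_mul_of_pos_left _ ha
    omega
  have hα32 : α3 < α2 := by
    have h1' : p ^ α3 ≤ B := Nat.le_of_dvd (by omega) hdvdB
    have h2' : B < p ^ α2 := by omega
    exact (Nat.pow_lt_pow_iff_right hp1).mp (by omega)
  -- (2b) α4 < α2 and α4 ≤ α3
  have key2b : p ^ α4 * q ^ β4 = p ^ α2 + c * B := by
    rw [← h4, ← h2, hBb]; ring
  have hα42 : α4 < α2 := by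
    by_contra hle
    push_neg at hle
    have hd1 : p ^ α2 ∣ p ^ α4 * q ^ β4 :=
      Dvd.dvd.mul_right (pow_dvd_pow p hle) _
    rw [key2b] at hd1
    have hd2 : p ^ α2 ∣ c * B := (Nat.dvd_add_right dvd_rfl).mp hd1
    have hd3 : p ^ α2 ∣ B :=
      (Nat.Coprime.pow_left _ ((Nat.Prime.coprime_iff_not_dvd hp).mpr hpc)).dvd_of_dvd_mul_left hd2
    have := Nat.le_of_dvd (by omega) hd3
    omega
  have hα43 : α4 ≤ α3 := by
    by_contra hlt
    push_neg at hlt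
    have hd1 : p ^ α4 ∣ p ^ α4 * q ^ β4 := Dvd.dvd.mul_right dvd_rfl _
    rw [key2b] at hd1
    have hd2 : p ^ α4 ∣ c * B :=
      (Nat.dvd_add_right (pow_dvd_pow p (by omega))).mp hd1
    have hd3 : p ^ α4 ∣ B :=
      (Nat.Coprime.pow_left _ ((Nat.Prime.coprime_iff_not_dvd hp).mpr hpc)).dvd_of_dvd_mul_left hd2
    exact hexB (dvd_trans (pow_dvd_pow p (by omega)) hd3)
  -- (2c) α3 ≤ α4, so α3 = α4
  have key2c : p ^ α3 * q ^ β3 = p ^ α2 + a * DC := by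
    rw [← h3, ← h2, hDCd]; ring
  have hα34 : α3 ≤ α4 := by
    by_contra hlt
    push_neg at hlt
    have hd1 : p ^ α3 ∣ p ^ α3 * q ^ β3 := Dvd.dvd.mul_right dvd_rfl _
    rw [key2c] at hd1
    have hd2 : p ^ α3 ∣ a * DC :=
      (Nat.dvd_add_right (pow_dvd_pow p (by omega))).mp hd1
    have hd3 : p ^ α3 ∣ DC :=
      (Nat.Coprime.pow_left _ ((Nat.Prime.coprime_iff_not_dvd hp).mpr hpa)).dvd_of_dvd_mul_left hd2
    exact hexDC (dvd_trans (pow_dvd_pow p (by omega)) hd3)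
  have hw : α4 = α3 := by omega
  -- (F14) β3 < β4
  have hβ34 : β3 < β4 := by
    have s1 : p ^ α3 ≤ B := Nat.le_of_dvd (by omega) hdvdB
    have s2 : q ^ β3 ≤ CA := Nat.le_of_dvd (by omega) hdvdCA
    have s3 : p ^ α3 * q ^ β3 ≤ B * CA := Nat.mul_le_mul s1 s2
    have e' : b * c = (a*a + a*CA + B*a) + B*CA := by rw [hBb, hCAc]; ring
    have s4 : B * CA < b * c + 1 := by
      rw [e']; exact Nat.lt_succ_of_le (Nat.le_add_left _ _)
    have s5 : p ^ α3 * q ^ β3 < p ^ α4 * q ^ β4 := by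
      have h' : p ^ α3 * q ^ β3 < b * c + 1 := lt_of_le_of_lt s3 (by omega)
      rwa [h4] at h'
    rw [hw] at s5
    have s6 : q ^ β3 < q ^ β4 := by
      have hpw : 0 < p ^ α3 := pow_pos (by omega) _
      exact Nat.lt_of_mul_lt_mul_left s5
    exact (Nat.pow_lt_pow_iff_right hq1).mp s6
  -- (F15) β3 = β1
  have hexp : q ^ β6 = q ^ β1 + (a * DB + CA * DB) + b * CA := by
    have e : c * d + 1 = (a * b + 1) + (a * DB + CA * DB) + b * CA := by
      rw [hCAc, hDBd]; ring
    rw [h6, h1] at e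
    exact e
  have hβ31 : β3 = β1 := by
    rcases Nat.lt_trichotomy β3 β1 with hlt | heq | hgt
    · exfalso
      have hd6 : q ^ (β3+1) ∣ q ^ β6 := pow_dvd_pow q (by omega)
      have hd1 : q ^ (β3+1) ∣ q ^ β1 := pow_dvd_pow q (by omega)
      have hdDB : q ^ (β3+1) ∣ DB := dvd_trans (pow_dvd_pow q (by omega)) hdvdDB
      have hdmid : q ^ (β3+1) ∣ q ^ β1 + (a * DB + CA * DB) :=
        dvd_add hd1 (dvd_add (hdDB.mul_left a) (hdDB.mul_left CA))
      have hbCA : q ^ (β3+1) ∣ b * CA := (Nat.dvd_add_right hdmid).mp (hexp ▸ hd6)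
      have : q ^ (β3+1) ∣ CA :=
        (Nat.Coprime.pow_left _ ((Nat.Prime.coprime_iff_not_dvd hq).mpr hqb)).dvd_of_dvd_mul_left hbCA
      exact hexCA this
    · exact heq
    · exfalso
      have hd6 : q ^ (β1+1) ∣ q ^ β6 := pow_dvd_pow q (by omega)
      have hdDB : q ^ (β1+1) ∣ DB := dvd_trans (pow_dvd_pow q (by omega)) hdvdDB
      have hdCA : q ^ (β1+1) ∣ CA := dvd_trans (pow_dvd_pow q (by omega)) hdvdCA
      have hdmid : q ^ (β1+1) ∣ (a * DB + CA * DB) + b * CA :=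
        dvd_add (dvd_add (hdDB.mul_left a) (hdDB.mul_left CA)) (hdCA.mul_left b)
      have hfin : q ^ (β1+1) ∣ q ^ β1 := by
        have h' : q ^ β6 = q ^ β1 + ((a * DB + CA * DB) + b * CA) := by
          rw [hexp]; ring
        have hd : q ^ (β1+1) ∣ q ^ β1 + ((a * DB + CA * DB) + b * CA) := h' ▸ hd6
        have h2' := Nat.dvd_sub hd hdmid
        rwa [Nat.add_sub_cancel] at h2'
      have := Nat.le_of_dvd (pow_pos (by omega) _) hfin
      have : q ^ β1 < q ^ (β1+1) := (Nat.pow_lt_pow_iff_right hq1).mpr (by omega)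
      omega
  -- (F16) 1 ≤ α3
  have hα31 : 1 ≤ α3 := by
    rcases Nat.eq_zero_or_pos α3 with h0 | h
    · exfalso
      rw [h0, pow_zero, one_mul, hβ31, ← h1] at h3
      have hdb : d = b := Nat.eq_of_mul_eq_mul_left ha (Nat.add_right_cancel h3)
      omega
    · exact h
  -- convenient forms
  have h3b : a * d + 1 = p ^ α3 * q ^ β1 := by rw [h3, hβ31]
  have h4b : b * c + 1 = p ^ α3 * q ^ β4 := by rw [h4, hw]
  -- (F17) M = β4 - β1 ≥ 1, p^α3 = a*t*q^M + 1
  obtain ⟨M, hM⟩ : ∃ M, β4 = β1 + M ∧ 1 ≤ M := ⟨β4 - β1, by omega⟩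
  obtain ⟨hMeq, hM1⟩ := hM
  obtain ⟨t, ht⟩ := hdvdDB
  have ht1 : 1 ≤ t := by
    rcases Nat.eq_zero_or_pos t with h0 | h
    · rw [h0, mul_zero] at ht; omega
    · exact h
  have e0 : p ^ α3 * q ^ β1 = q ^ β1 + a * DB := by
    have e : a * d + 1 = (a * b + 1) + a * DB := by rw [hDBd]; ring
    rw [h3b, h1] at e
    exact e
  have e2 : q ^ β1 * (a * t * q ^ M + 1) = q ^ β1 * p ^ α3 := by
    calc q ^ β1 * (a * t * q ^ M + 1) = q ^ β1 + a * (q ^ β1 * q ^ M * t) := by ring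
      _ = q ^ β1 + a * (q ^ β4 * t) := by rw [hMeq, pow_add]
      _ = q ^ β1 + a * DB := by rw [ht]
      _ = p ^ α3 * q ^ β1 := e0.symm
      _ = q ^ β1 * p ^ α3 := by ring
  have hKEY : p ^ α3 = a * t * q ^ M + 1 :=
    (Nat.eq_of_mul_eq_mul_left (pow_pos (by omega) β1) e2).symm
  -- (F18)
  obtain ⟨r2, hr2⟩ : ∃ r, α2 = α3 + r ∧ 1 ≤ r := ⟨α2 - α3, by omega⟩
  obtain ⟨hr2eq, hr21⟩ := hr2
  obtain ⟨r5, hr5⟩ : ∃ r, α5 = α3 + r ∧ 1 ≤ r := ⟨α5 - α3, by omega⟩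
  obtain ⟨hr5eq, hr51⟩ := hr5
  have hr25 : r2 < r5 := by omega
  have identM : (a*c+1)*(b*d+1) + ((a*d+1) + (b*c+1)) = (a*d+1)*(b*c+1) + ((a*c+1) + (b*d+1)) := by
    ring
  rw [h2, h5, h3b, h4b] at identM
  have hL : p ^ α3 * (p ^ r2 * p ^ α5 + (q ^ β1 + q ^ β4)) =
      p ^ α3 * (q ^ β1 * (p ^ α3 * q ^ β4) + (p ^ r2 + p ^ r5)) := by
    calc p ^ α3 * (p ^ r2 * p ^ α5 + (q ^ β1 + q ^ β4))
        = p ^ (α3 + r2) * p ^ α5 + (p ^ α3 * q ^ β1 + p ^ α3 * q ^ β4) := by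
          rw [pow_add]; ring
      _ = p ^ α2 * p ^ α5 + (p ^ α3 * q ^ β1 + p ^ α3 * q ^ β4) := by rw [← hr2eq]
      _ = p ^ α3 * q ^ β1 * (p ^ α3 * q ^ β4) + (p ^ α2 + p ^ α5) := identM
      _ = p ^ α3 * q ^ β1 * (p ^ α3 * q ^ β4) + (p ^ (α3 + r2) + p ^ (α3 + r5)) := by
          rw [← hr2eq, ← hr5eq]
      _ = p ^ α3 * (q ^ β1 * (p ^ α3 * q ^ β4) + (p ^ r2 + p ^ r5)) := by
          rw [pow_add, pow_add]; ring
  have M4 : p ^ r2 * p ^ α5 + (q ^ β1 + q ^ β4) =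
      q ^ β1 * (p ^ α3 * q ^ β4) + (p ^ r2 + p ^ r5) :=
    Nat.eq_of_mul_eq_mul_left (pow_pos (by omega) α3) hL
  have hrw : ∀ r : ℕ, r ≤ α3 → r ≤ r2 → p ^ r ∣ 1 + q ^ M := by
    intro r hra hrr
    have hd_t1 : p ^ r ∣ q ^ β1 * (p ^ α3 * q ^ β4) :=
      Dvd.dvd.mul_left ((pow_dvd_pow p hra).mul_right _) _
    have hd_t2 : p ^ r ∣ p ^ r2 := pow_dvd_pow p hrr
    have hd_t3 : p ^ r ∣ p ^ r5 := pow_dvd_pow p (by omega)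
    have hd_A : p ^ r ∣ p ^ r2 * p ^ α5 := (pow_dvd_pow p hrr).mul_right _
    have hR : p ^ r ∣ q ^ β1 * (p ^ α3 * q ^ β4) + (p ^ r2 + p ^ r5) :=
      dvd_add hd_t1 (dvd_add hd_t2 hd_t3)
    have hL2 : p ^ r ∣ p ^ r2 * p ^ α5 + (q ^ β1 + q ^ β4) := M4 ▸ hR
    have hsum : p ^ r ∣ q ^ β1 + q ^ β4 := (Nat.dvd_add_right hd_A).mp hL2
    have hq14 : q ^ β1 + q ^ β4 = q ^ β1 * (1 + q ^ M) := by
      rw [hMeq, pow_add]; ring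
    rw [hq14] at hsum
    exact (Nat.Coprime.pow r β1 hcoppq : Nat.Coprime (p^r) (q^β1)).dvd_of_dvd_mul_left hsum
  -- parity pincer : r2 < α3 and p^r2 ≤ 1 + q^M
  have hr2lt : r2 < α3 ∧ p ^ r2 ≤ 1 + q ^ M := by
    rcases le_or_gt α3 r2 with hle | hlt
    · exfalso
      have hda : p ^ α3 ∣ 1 + q ^ M := hrw α3 le_rfl hle
      have hle1 : p ^ α3 ≤ 1 + q ^ M := Nat.le_of_dvd (by positivity) hda
      have hge1 : q ^ M + 1 ≤ p ^ α3 := by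
        have : q ^ M ≤ a * t * q ^ M := Nat.le_mul_of_pos_left _ (by positivity)
        omega
      have heqp : p ^ α3 = q ^ M + 1 := by omega
      have ho1 : Odd (p ^ α3) := hpo.pow
      have ho2 : Odd (q ^ M) := hqo.pow
      rw [Nat.odd_iff] at ho1 ho2
      omega
    · exact ⟨hlt, Nat.le_of_dvd (by positivity) (hrw r2 (by omega) le_rfl)⟩
  obtain ⟨hr2α3, hple⟩ := hr2lt
  -- (F19) a = 1
  have hchain : (a*c+1)*(a*b+1) ≤ (b*c+1) + B*(a*b+1) := by
    have s1 : p ^ α2 ≤ p ^ α3 * (1 + q ^ M) := by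
      calc p ^ α2 = p ^ α3 * p ^ r2 := by rw [hr2eq, pow_add]
        _ ≤ p ^ α3 * (1 + q ^ M) := Nat.mul_le_mul_left _ hple
    have s2 : p ^ α2 * q ^ β1 ≤ (p ^ α3 * q ^ β4) + p ^ α3 * q ^ β1 := by
      calc p ^ α2 * q ^ β1 ≤ (p ^ α3 * (1 + q ^ M)) * q ^ β1 :=
            Nat.mul_le_mul_right _ s1
        _ = p ^ α3 * (q ^ β1 * q ^ M) + p ^ α3 * q ^ β1 := by ring
        _ = (p ^ α3 * q ^ β4) + p ^ α3 * q ^ β1 := by rw [hMeq, pow_add]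
    have s3 : p ^ α3 ≤ B := Nat.le_of_dvd (by omega) hdvdB
    have s4 : p ^ α3 * q ^ β1 ≤ B * q ^ β1 := Nat.mul_le_mul_right _ s3
    have s5 : p ^ α2 * q ^ β1 ≤ (p ^ α3 * q ^ β4) + B * q ^ β1 := by omega
    rw [← h1, ← h2, ← h4b] at s5
    exact s5
  have ha1 : a = 1 := by
    by_contra hne
    have h2a : 2 ≤ a := by omega
    exact aux19 a b c B h2a hab hbc hBb hchain
  -- (F20) final contradiction
  have h1' : b + 1 = q ^ β1 := by rw [← h1, ha1, one_mul]
  have h2' : c + 1 = p ^ α3 * p ^ r2 := by rw [← pow_add, ← hr2eq, ← h2, ha1, one_mul]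
  have hbc1 : b * c + 1 = p ^ α3 * (q ^ β1 * q ^ M) := by
    rw [h4b, hMeq, pow_add]
  have hE : p ^ α3 * (q ^ β1 * q ^ M) + q ^ β1 + p ^ α3 * p ^ r2
      = q ^ β1 * (p ^ α3 * p ^ r2) + 2 := by
    have e : (b*c+1) + (b+1) + (c+1) = (b+1)*(c+1) + 2 := by ring
    rw [hbc1, h1', h2'] at e
    exact e
  have hK3 : 3 ≤ p ^ α3 := le_trans hp3 (Nat.le_self_pow (by omega) p)
  have hKle : p ^ α3 + 2 ≤ q ^ β1 := by
    have s3 : p ^ α3 ≤ B := Nat.le_of_dvd (by omega) hdvdB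
    omega
  exact finalstep q β1 M (p ^ α3) (p ^ r2) hq5 hβ1 hK3 hKle hE
end
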